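/- A k-tangential subset of ℝⁿ has Hausdorff dimension at most k. -/

import Mathlib

open Filter Topology MeasureTheory ENNReal

/-- `E ⊆ ℝⁿ` is `k`-tangential: at each `x ∈ E` there is a `k`-dimensional subspace `V`
such that for sequences `x + h j ∈ E` with `h j → 0`, the component of `h j`
orthogonal to `V` is `o(|component in V|)`. -/
def IsTangentialSet (n k : ℕ) (E : Set (EuclideanSpace ℝ (Fin n))) : Prop :=
  ∀ x ∈ E, ∃ V : Submodule ℝ (EuclideanSpace ℝ (Fin n)),
    Module.finrank ℝ V = k ∧
    ∀ h : ℕ → EuclideanSpace ℝ (Fin n),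
      (∀ j, x + h j ∈ E) → Tendsto h atTop (𝓝 0) →
      ∀ ε : ℝ, 0 < ε → ∀ᶠ j in atTop,
        ‖(Submodule.orthogonalProjectionOnto Vᗮ (h j) : EuclideanSpace ℝ (Fin n))‖ ≤
          ε * ‖(Submodule.orthogonalProjectionOnto V (h j) : EuclideanSpace ℝ (Fin n))‖

/-- Non-sequential form of the tangency condition. -/
lemma tangential_cone (n k : ℕ) (E : Set (EuclideanSpace ℝ (Fin n)))
    (hE : IsTangentialSet n k E) (x : EuclideanSpace ℝ (Fin n)) (hx : x ∈ E) :
    ∃ V : Submodule ℝ (EuclideanSpace ℝ (Fin n)), Module.finrank ℝ V = k ∧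
      ∀ ε : ℝ, 0 < ε → ∃ δ : ℝ, 0 < δ ∧ ∀ h : EuclideanSpace ℝ (Fin n),
        x + h ∈ E → ‖h‖ ≤ δ →
        ‖(Submodule.orthogonalProjectionOnto Vᗮ h : EuclideanSpace ℝ (Fin n))‖ ≤
          ε * ‖(Submodule.orthogonalProjectionOnto V h : EuclideanSpace ℝ (Fin n))‖ := by
  obtain ⟨V, hVk, hV⟩ := hE x hx
  refine ⟨V, hVk, fun ε hε => ?_⟩
  by_contra hcon
  push_neg at hcon
  choose h hh1 hh2 hh3 using fun j : ℕ => hcon (1 / (j + 1)) (by positivity)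
  have htend : Tendsto h atTop (𝓝 0) := by
    have : Tendsto (fun j : ℕ => (1 : ℝ) / (j + 1)) atTop (𝓝 0) :=
      tendsto_one_div_add_atTop_nhds_zero_nat
    rw [tendsto_zero_iff_norm_tendsto_zero]
    exact squeeze_zero (fun j => norm_nonneg _) hh2 this
  have := hV h hh1 htend ε hε
  rcases (this.and (eventually_atTop.2 ⟨0, fun j _ => trivial⟩)).exists with ⟨j, hj, -⟩
  exact absurd hj (not_le.mpr (hh3 j))

/-- A piece on which the tangent planes are nearly constant and the cone condition holds
at a uniform scale has Hausdorff dimension at most `k`. -/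
lemma piece_dimH_le (n k : ℕ) (E : Set (EuclideanSpace ℝ (Fin n)))
    (Q : EuclideanSpace ℝ (Fin n) →L[ℝ] EuclideanSpace ℝ (Fin n))
    (S : Set (EuclideanSpace ℝ (Fin n))) (δ : ℝ)
    (hS : ∀ y ∈ S, ∃ V : Submodule ℝ (EuclideanSpace ℝ (Fin n)),
      Module.finrank ℝ V = k ∧
      (∀ h : EuclideanSpace ℝ (Fin n), y + h ∈ E → ‖h‖ ≤ δ →
        ‖(Submodule.orthogonalProjectionOnto Vᗮ h : EuclideanSpace ℝ (Fin n))‖ ≤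
          (1/4) * ‖(Submodule.orthogonalProjectionOnto V h : EuclideanSpace ℝ (Fin n))‖) ∧
      ‖V.subtypeL.comp (Submodule.orthogonalProjectionOnto V) - Q‖ ≤ 1/8)
    (hSE : S ⊆ E)
    (hdiam : ∀ y ∈ S, ∀ y' ∈ S, ‖y' - y‖ ≤ δ) :
    dimH S ≤ (k : ℝ≥0∞) := by
  rcases S.eq_empty_or_nonempty with rfl | ⟨y₀, hy₀⟩
  · simp
  obtain ⟨V₀, hV₀k, -, hV₀Q⟩ := hS y₀ hy₀
  set P₀ : EuclideanSpace ℝ (Fin n) →L[ℝ] EuclideanSpace ℝ (Fin n) :=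
    V₀.subtypeL.comp (Submodule.orthogonalProjectionOnto V₀) with hP₀
  -- key expansion estimate
  have key : ∀ y ∈ S, ∀ y' ∈ S, ‖y' - y‖ ≤ 2 * ‖P₀ y' - P₀ y‖ := by
    intro y hy y' hy'
    obtain ⟨V, hVk, hVcone, hVQ⟩ := hS y hy
    set h := y' - y with hh
    have hmem : y + h ∈ E := by
      simpa [hh] using hSE hy'
    have hnorm : ‖h‖ ≤ δ := hdiam y hy y' hy'
    have hcone := hVcone h hmem hnorm
    set P : EuclideanSpace ℝ (Fin n) →L[ℝ] EuclideanSpace ℝ (Fin n) :=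
      V.subtypeL.comp (Submodule.orthogonalProjectionOnto V) with hP
    have hPh : P h = (Submodule.orthogonalProjectionOnto V h : EuclideanSpace ℝ (Fin n)) := rfl
    have hdecomp : (Submodule.orthogonalProjectionOnto V h : EuclideanSpace ℝ (Fin n)) +
        (Submodule.orthogonalProjectionOnto Vᗮ h : EuclideanSpace ℝ (Fin n)) = h :=
      V.starProjection_add_starProjection_orthogonal h
    have h1 : ‖h‖ ≤ (5/4) * ‖P h‖ := by
      calc ‖h‖ = ‖(Submodule.orthogonalProjectionOnto V h : EuclideanSpace ℝ (Fin n)) +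
            (Submodule.orthogonalProjectionOnto Vᗮ h : EuclideanSpace ℝ (Fin n))‖ := by rw [hdecomp]
        _ ≤ ‖(Submodule.orthogonalProjectionOnto V h : EuclideanSpace ℝ (Fin n))‖ +
            ‖(Submodule.orthogonalProjectionOnto Vᗮ h : EuclideanSpace ℝ (Fin n))‖ := norm_add_le _ _
        _ ≤ ‖(Submodule.orthogonalProjectionOnto V h : EuclideanSpace ℝ (Fin n))‖ +
            (1/4) * ‖(Submodule.orthogonalProjectionOnto V h : EuclideanSpace ℝ (Fin n))‖ := by linarith
        _ = (5/4) * ‖P h‖ := by rw [hPh]; ring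
    have h2 : ‖P h - P₀ h‖ ≤ (1/4) * ‖h‖ := by
      have := (P - P₀).le_opNorm h
      have hle : ‖P - P₀‖ ≤ 1/4 := by
        have hsplit : P - P₀ = (P - Q) + (Q - P₀) := by abel
        calc ‖P - P₀‖ = ‖(P - Q) + (Q - P₀)‖ := by rw [hsplit]
          _ ≤ ‖P - Q‖ + ‖Q - P₀‖ := norm_add_le _ _
          _ ≤ 1/8 + 1/8 := by
              have : ‖Q - P₀‖ = ‖P₀ - Q‖ := norm_sub_rev _ _
              rw [this]
              exact add_le_add hVQ hV₀Q
          _ = 1/4 := by norm_num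
      calc ‖P h - P₀ h‖ = ‖(P - P₀) h‖ := by simp
        _ ≤ ‖P - P₀‖ * ‖h‖ := (P - P₀).le_opNorm h
        _ ≤ (1/4) * ‖h‖ := by
            exact mul_le_mul_of_nonneg_right hle (norm_nonneg _)
    have h3 : ‖P₀ h‖ ≥ ‖P h‖ - (1/4) * ‖h‖ := by
      have := norm_sub_norm_le (P h) (P₀ h)
      linarith
    have h4 : ‖P h‖ ≥ (4/5) * ‖h‖ := by linarith
    have h5 : ‖P₀ h‖ ≥ (1/2) * ‖h‖ := by linarith [norm_nonneg h]
    have : P₀ y' - P₀ y = P₀ h := by rw [hh, map_sub]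
    rw [this]
    linarith
  -- injectivity of P₀ on S
  have hinj : Set.InjOn P₀ S := by
    intro y hy y' hy' hpe
    have := key y hy y' hy'
    rw [hpe] at this
    simp only [sub_self, norm_zero, mul_zero] at this
    have : y' - y = 0 := norm_le_zero_iff.mp this
    exact (sub_eq_zero.mp this).symm
  -- the inverse map is Lipschitz on the image
  set g : EuclideanSpace ℝ (Fin n) → EuclideanSpace ℝ (Fin n) := Function.invFunOn P₀ S with hg
  have hgmem : ∀ a ∈ P₀ '' S, g a ∈ S ∧ P₀ (g a) = a := by
    intro a ha
    obtain ⟨y, hy, rfl⟩ := ha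
    exact ⟨Function.invFunOn_mem ⟨y, hy, rfl⟩, Function.invFunOn_eq ⟨y, hy, rfl⟩⟩
  have hglip : LipschitzOnWith 2 g (P₀ '' S) := by
    apply LipschitzOnWith.of_dist_le_mul
    intro a ha b hb
    obtain ⟨hga, hfa⟩ := hgmem a ha
    obtain ⟨hgb, hfb⟩ := hgmem b hb
    have := key (g b) hgb (g a) hga
    rw [hfa, hfb] at this
    simpa [dist_eq_norm, NNReal.coe_ofNat] using this
  have himg : g '' (P₀ '' S) = S := by
    apply Set.Subset.antisymm
    · rintro _ ⟨a, ha, rfl⟩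
      exact (hgmem a ha).1
    · intro y hy
      refine ⟨P₀ y, ⟨y, hy, rfl⟩, ?_⟩
      obtain ⟨hgm, hfm⟩ := hgmem (P₀ y) ⟨y, hy, rfl⟩
      exact hinj hgm hy hfm
  have hsub : P₀ '' S ⊆ (V₀ : Set (EuclideanSpace ℝ (Fin n))) := by
    rintro _ ⟨y, hy, rfl⟩
    exact SetLike.coe_mem ((Submodule.orthogonalProjectionOnto V₀) y)
  have hdimV : dimH (V₀ : Set (EuclideanSpace ℝ (Fin n))) = (k : ℝ≥0∞) := by
    have hiso : Isometry ((↑) : V₀ → EuclideanSpace ℝ (Fin n)) := isometry_subtype_coe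
    have h1 : ((↑) : V₀ → EuclideanSpace ℝ (Fin n)) '' Set.univ =
        (V₀ : Set (EuclideanSpace ℝ (Fin n))) := by
      rw [Set.image_univ, Subtype.range_coe_subtype]; rfl
    rw [← h1, hiso.dimH_image, Real.dimH_univ_eq_finrank, hV₀k]
  calc dimH S = dimH (g '' (P₀ '' S)) := by rw [himg]
    _ ≤ dimH (P₀ '' S) := hglip.dimH_image_le
    _ ≤ dimH (V₀ : Set (EuclideanSpace ℝ (Fin n))) := dimH_mono hsub
    _ = (k : ℝ≥0∞) := hdimV

theorem tangential_dimH_le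
    (n k : ℕ) (E : Set (EuclideanSpace ℝ (Fin n))) (hE : IsTangentialSet n k E) :
    dimH E ≤ (k : ℝ≥0∞) := by
  -- countable dense families
  obtain ⟨u, hu⟩ : ∃ u : ℕ → (EuclideanSpace ℝ (Fin n) →L[ℝ] EuclideanSpace ℝ (Fin n)), DenseRange u :=
    ⟨TopologicalSpace.denseSeq _, TopologicalSpace.denseRange_denseSeq _⟩
  obtain ⟨v, hv⟩ : ∃ v : ℕ → EuclideanSpace ℝ (Fin n), DenseRange v :=
    ⟨TopologicalSpace.denseSeq _, TopologicalSpace.denseRange_denseSeq _⟩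
  -- the pieces
  set S : ℕ → ℕ → ℕ → Set (EuclideanSpace ℝ (Fin n)) := fun i m l =>
    {y | y ∈ E ∧ (∃ V : Submodule ℝ (EuclideanSpace ℝ (Fin n)), Module.finrank ℝ V = k ∧
      (∀ h : EuclideanSpace ℝ (Fin n), y + h ∈ E → ‖h‖ ≤ 1 / (i + 1) →
        ‖(Submodule.orthogonalProjectionOnto Vᗮ h : EuclideanSpace ℝ (Fin n))‖ ≤
          (1/4) * ‖(Submodule.orthogonalProjectionOnto V h : EuclideanSpace ℝ (Fin n))‖) ∧
      ‖V.subtypeL.comp (Submodule.orthogonalProjectionOnto V) - u m‖ ≤ 1/8) ∧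
      dist y (v l) < 1 / (2 * (i + 1))} with hSdef
  -- every point of E lies in some piece
  have hcover : E ⊆ ⋃ i, ⋃ m, ⋃ l, S i m l := by
    intro y hy
    obtain ⟨V, hVk, hV⟩ := tangential_cone n k E hE y hy
    obtain ⟨δ, hδ, hcone⟩ := hV (1/4) (by norm_num)
    obtain ⟨i, hi⟩ := exists_nat_one_div_lt hδ
    obtain ⟨m, hm⟩ := hu.exists_dist_lt (V.subtypeL.comp (Submodule.orthogonalProjectionOnto V)) (by norm_num : (0:ℝ) < 1/8)
    obtain ⟨l, hl⟩ := hv.exists_dist_lt y (by positivity : (0:ℝ) < 1 / (2 * (i + 1)))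
    refine Set.mem_iUnion.2 ⟨i, Set.mem_iUnion.2 ⟨m, Set.mem_iUnion.2 ⟨l, ?_⟩⟩⟩
    refine ⟨hy, ⟨V, hVk, fun h hh1 hh2 => hcone h hh1 (hh2.trans hi.le), ?_⟩, hl⟩
    rw [dist_eq_norm] at hm
    exact hm.le
  refine (dimH_mono hcover).trans ?_
  rw [dimH_iUnion]
  refine iSup_le fun i => ?_
  rw [dimH_iUnion]
  refine iSup_le fun m => ?_
  rw [dimH_iUnion]
  refine iSup_le fun l => ?_
  refine piece_dimH_le n k E (u m) (S i m l) (1 / (i + 1)) ?_ ?_ ?_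
  · intro y hy
    exact hy.2.1
  · intro y hy
    exact hy.1
  · intro y hy y' hy'
    have h1 := hy.2.2
    have h2 := hy'.2.2
    have : dist y' y < 1 / (i + 1) := by
      calc dist y' y ≤ dist y' (v l) + dist (v l) y := dist_triangle _ _ _
        _ < 1 / (2 * (i + 1)) + 1 / (2 * (i + 1)) := by
            rw [dist_comm (v l) y]; exact add_lt_add h2 h1
        _ = 1 / (i + 1) := by
            have h0 : ((i : ℝ) + 1) ≠ 0 := by positivity
            rw [← add_div]
            rw [show (1:ℝ) + 1 = 2 by norm_num, mul_comm]
            rw [mul_comm ((i:ℝ)+1) 2] at *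
            field_simp
    rw [← dist_eq_norm]
    exact this.le
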